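/- Let n ≥ 2, J > 0 and H = 0 (so the model is invariant under the global spin flip σ ↦ −σ), and let P̃ be the (n+1)×(n+1) magnetization chain matrix of the mean-field Glauber dynamics. Let λ₂ be the second-largest eigenvalue of the full Glauber chain, and let f = (f_0,…,f_n) be an increasing eigenvector of P̃ with eigenvalue λ₂. Then f is antisymmetric: f_k = −f_{n−k} for all 0 ≤ k ≤ n. Consequently f_k ≤ 0 for all k ≤ n/2 and f_k ≥ 0 for all k ≥ n/2. -/

import Mathlib

/-- The spin value of a site: `+1` for `true`, `-1` for `false`. -/
def spin (b : Bool) : ℝ := if b then 1 else -1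

/-- The rate at which the Glauber dynamics for the mean-field Ising model on the
complete graph with `n` vertices, coupling `J` and uniform external field `H`
flips the spin at vertex `x` of the configuration `σ`:
`(1/n) · 1/(1 + exp(−2 σ'_x (J Σ_{y≠x} σ_y + H)))` where `σ'_x = −σ_x`. -/
noncomputable def flipRate (n : ℕ) (J H : ℝ) (σ : Fin n → Bool) (x : Fin n) : ℝ :=
  (1 / (n : ℝ)) *
    (1 + Real.exp (-2 * spin (!σ x) *
      (J * ∑ y ∈ Finset.univ.erase x, spin (σ y) + H)))⁻¹

/-- The transition matrix of the Glauber dynamics for the mean-field Ising model on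
the complete graph with `n` vertices, coupling `J` and uniform external field `H`.
Transitions change at most one coordinate. -/
noncomputable def glauberP (n : ℕ) (J H : ℝ) : Matrix (Fin n → Bool) (Fin n → Bool) ℝ :=
  fun σ σ' =>
    if σ' = σ then 1 - ∑ x : Fin n, flipRate n J H σ x
    else ∑ x : Fin n, if σ' = Function.update σ x (!σ x) then flipRate n J H σ x else 0

/-- `μ` is a (real) eigenvalue of the matrix `M`. -/
def IsEigenvalue {m : Type*} [Fintype m] (M : Matrix m m ℝ) (μ : ℝ) : Prop :=
  ∃ v : m → ℝ, v ≠ 0 ∧ M.mulVec v = μ • v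

/-- `μ` is the second-largest eigenvalue of the transition matrix `M` whose
eigenvalues are real and satisfy `1 = λ₁ > λ₂ ≥ … ≥ λ_N`: it is the largest
eigenvalue different from `1`. -/
def IsSecondEigenvalue {m : Type*} [Fintype m] (M : Matrix m m ℝ) (μ : ℝ) : Prop :=
  IsEigenvalue M μ ∧ μ ≠ 1 ∧ ∀ μ' : ℝ, IsEigenvalue M μ' → μ' ≠ 1 → μ' ≤ μ


/-- Upward transition rate of the magnetization chain:
`P̃_{k,k+1} = ((n−k)/n) · 1/(1 + exp((n−2k−1)·2J − 2H))`. -/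
noncomputable def pUp (n : ℕ) (J H : ℝ) (k : ℕ) : ℝ :=
  (((n : ℝ) - k) / n) * (1 + Real.exp (((n : ℝ) - 2 * k - 1) * (2 * J) - 2 * H))⁻¹

/-- Downward transition rate of the magnetization chain:
`P̃_{k,k−1} = (k/n) · 1/(1 + exp(−(n−2k+1)·2J + 2H))`. -/
noncomputable def pDown (n : ℕ) (J H : ℝ) (k : ℕ) : ℝ :=
  ((k : ℝ) / n) * (1 + Real.exp (-((n : ℝ) - 2 * k + 1) * (2 * J) + 2 * H))⁻¹

/-- The `(n+1)×(n+1)` tridiagonal transition matrix of the magnetization chain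
associated to the mean-field Glauber dynamics.  (Note `pDown n J H 0 = 0` and
`pUp n J H n = 0`, implementing the conventions `P̃_{0,−1} = P̃_{n,n+1} = 0`.) -/
noncomputable def magP (n : ℕ) (J H : ℝ) : Matrix (Fin (n + 1)) (Fin (n + 1)) ℝ :=
  fun k l =>
    if (l : ℕ) = (k : ℕ) + 1 then pUp n J H k
    else if (k : ℕ) = (l : ℕ) + 1 then pDown n J H k
    else if k = l then 1 - pDown n J H k - pUp n J H k
    else 0

lemma pDown_zero (n : ℕ) (J H : ℝ) : pDown n J H 0 = 0 := by simp [pDown]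

lemma pUp_pos {n k : ℕ} (J H : ℝ) (hk : k < n) : 0 < pUp n J H k := by
  have h1 : (0:ℝ) < (n:ℝ) - k := by
    have : (k:ℝ) < n := by exact_mod_cast hk
    linarith
  have h2 : (0:ℝ) < (n:ℝ) := by
    have : 0 < n := Nat.pos_of_ne_zero (by omega)
    exact_mod_cast this
  have h3 : (0:ℝ) < 1 + Real.exp (((n : ℝ) - 2 * k - 1) * (2 * J) - 2 * H) := by positivity
  exact mul_pos (div_pos h1 h2) (inv_pos.mpr h3)

lemma pUp_symm (n : ℕ) (J : ℝ) {k : ℕ} (hk : k ≤ n) :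
    pUp n J 0 k = pDown n J 0 (n - k) := by
  have h1 : ((n - k : ℕ) : ℝ) = (n : ℝ) - k := by rw [Nat.cast_sub hk]
  unfold pUp pDown
  rw [h1]
  have h2 : ((n : ℝ) - 2 * k - 1) * (2 * J) - 2 * 0
      = -((n : ℝ) - 2 * ((n:ℝ) - k) + 1) * (2 * J) + 2 * 0 := by ring
  rw [h2]

lemma pDown_symm (n : ℕ) (J : ℝ) {k : ℕ} (hk : k ≤ n) :
    pDown n J 0 k = pUp n J 0 (n - k) := by
  have h := pUp_symm n J (Nat.sub_le n k)
  rw [Nat.sub_sub_self hk] at h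
  exact h.symm

/-- extension of a vector on `Fin (n+1)` to `ℕ` by zero -/
noncomputable def extF {n : ℕ} (f : Fin (n + 1) → ℝ) : ℕ → ℝ :=
  fun j => if h : j < n + 1 then f ⟨j, h⟩ else 0

lemma sum_ite_coe {n : ℕ} (c : ℕ) (g : Fin (n + 1) → ℝ) :
    ∑ l : Fin (n + 1), (if (l : ℕ) = c then g l else 0)
      = if h : c < n + 1 then g ⟨c, h⟩ else 0 := by
  by_cases h : c < n + 1
  · rw [dif_pos h, Finset.sum_eq_single (⟨c, h⟩ : Fin (n + 1))]
    · simp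
    · intro b _ hb
      rw [if_neg]
      simpa [Fin.ext_iff] using hb
    · simp
  · rw [dif_neg h]
    apply Finset.sum_eq_zero
    intro l _
    rw [if_neg]
    intro hl
    exact h (hl ▸ l.isLt)

lemma sum_ite_coe_mul {n : ℕ} (c : ℕ) (a : ℝ) (f : Fin (n + 1) → ℝ) :
    ∑ l : Fin (n + 1), (if (l : ℕ) = c then a * f l else 0) = a * extF f c := by
  rw [sum_ite_coe c (fun l => a * f l)]
  unfold extF
  split <;> simp

lemma magP_rec {n : ℕ} {J H lam : ℝ} {f : Fin (n + 1) → ℝ}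
    (hf : (magP n J H).mulVec f = lam • f) :
    ∀ j, j ≤ n →
      pDown n J H j * extF f (j - 1)
        + (1 - pDown n J H j - pUp n J H j) * extF f j
        + pUp n J H j * extF f (j + 1) = lam * extF f j := by
  intro j hj
  have hk : j < n + 1 := by omega
  have h1 := congrFun hf ⟨j, hk⟩
  simp only [Matrix.mulVec, dotProduct, Pi.smul_apply, smul_eq_mul] at h1
  have hfj : extF f j = f ⟨j, hk⟩ := dif_pos hk
  rcases Nat.eq_zero_or_pos j with hj0 | hj1
  · subst hj0
    have hsplit : ∀ l : Fin (n + 1),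
        magP n J H ⟨0, hk⟩ l * f l
          = (if (l : ℕ) = 1 then pUp n J H 0 * f l else 0)
            + (if (l : ℕ) = 0 then (1 - pDown n J H 0 - pUp n J H 0) * f l else 0) := by
      intro l
      simp only [magP]
      by_cases e1 : (l : ℕ) = 1
      · rw [if_pos, if_pos e1, if_neg] <;> simp [e1]
      · rw [if_neg, if_neg e1]
        · by_cases e2 : (l : ℕ) = 0
          · rw [if_neg (by omega), if_pos, if_pos e2]
            · ring
            · exact Fin.ext (by simpa using e2.symm)
          · rw [if_neg (by omega), if_neg, if_neg e2]
            · ring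
            · intro hq; exact e2 (by rw [← hq])
        · simpa using e1
    rw [Finset.sum_congr rfl (fun l _ => hsplit l), Finset.sum_add_distrib,
      sum_ite_coe_mul, sum_ite_coe_mul] at h1
    rw [pDown_zero] at h1 ⊢
    simp only [Nat.zero_sub, Nat.zero_add]
    rw [hfj] at h1 ⊢
    linarith [h1]
  · obtain ⟨m, rfl⟩ : ∃ m, j = m + 1 := ⟨j - 1, by omega⟩
    have hsplit : ∀ l : Fin (n + 1),
        magP n J H ⟨m + 1, hk⟩ l * f l
          = (if (l : ℕ) = m + 2 then pUp n J H (m + 1) * f l else 0)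
            + ((if (l : ℕ) = m then pDown n J H (m + 1) * f l else 0)
            + (if (l : ℕ) = m + 1 then (1 - pDown n J H (m + 1) - pUp n J H (m + 1)) * f l else 0)) := by
      intro l
      simp only [magP]
      by_cases e1 : (l : ℕ) = m + 2
      · rw [if_pos, if_pos e1, if_neg (by omega), if_neg (by omega)]
        · ring
        · simpa using e1
      · rw [if_neg (by simpa using e1), if_neg e1]
        by_cases e2 : (l : ℕ) = m
        · rw [if_pos (by omega), if_pos e2, if_neg (by omega)]
          ring
        · rw [if_neg (by omega), if_neg e2]
          by_cases e3 : (l : ℕ) = m + 1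
          · rw [if_pos (Fin.ext (by simpa using e3.symm)), if_pos e3]
            ring
          · rw [if_neg, if_neg e3]
            · ring
            · intro hq; exact e3 (by simpa [Fin.ext_iff] using hq.symm)
    rw [Finset.sum_congr rfl (fun l _ => hsplit l), Finset.sum_add_distrib,
      Finset.sum_add_distrib, sum_ite_coe_mul, sum_ite_coe_mul, sum_ite_coe_mul] at h1
    have e4 : m + 1 - 1 = m := by omega
    have e5 : m + 1 + 1 = m + 2 := by omega
    rw [e4, e5]
    rw [hfj] at h1 ⊢
    linarith [h1]


/-- At zero external field the model is invariant under the global spin flip, and any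
increasing eigenvector `f` of the magnetization chain for the second-largest
eigenvalue `λ₂` is antisymmetric: `f_k = −f_{n−k}` for all `k`.  Consequently
`f_k ≤ 0` for `k ≤ n/2` and `f_k ≥ 0` for `k ≥ n/2`.  (For `k : Fin (n+1)`,
`k.rev` is the index `n − k`.) -/
theorem magP_increasing_eigenvector_antisymmetric
    (n : ℕ) (hn : 2 ≤ n) (J : ℝ) (hJ : 0 < J) (lam : ℝ)
    (hlam : IsSecondEigenvalue (glauberP n J 0) lam)
    (f : Fin (n + 1) → ℝ)
    (hf : (magP n J 0).mulVec f = lam • f)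
    (hfinc : ∀ k : Fin n, f k.castSucc ≤ f k.succ)
    (hfnc : ¬ ∀ k l : Fin (n + 1), f k = f l) :
    (∀ k : Fin (n + 1), f k = -f k.rev) ∧
    (∀ k : Fin (n + 1), 2 * (k : ℕ) ≤ n → f k ≤ 0) ∧
    (∀ k : Fin (n + 1), n ≤ 2 * (k : ℕ) → 0 ≤ f k) := by
  have hrec := magP_rec hf
  set F : ℕ → ℝ := extF f with hF
  -- the flipped vector G j = -F (n - j) satisfies the same recurrence
  set G : ℕ → ℝ := fun j => -F (n - j) with hG
  have hrecg : ∀ j, j ≤ n →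
      pDown n J 0 j * G (j - 1)
        + (1 - pDown n J 0 j - pUp n J 0 j) * G j
        + pUp n J 0 j * G (j + 1) = lam * G j := by
    intro j hj
    have h0 := hrec (n - j) (Nat.sub_le n j)
    have hd : pDown n J 0 (n - j) = pUp n J 0 j := by
      rw [pUp_symm n J hj]
    have hu : pUp n J 0 (n - j) = pDown n J 0 j := by
      rw [pDown_symm n J hj]
    rw [hd, hu] at h0
    rcases Nat.eq_zero_or_pos j with rfl | hj1
    · -- j = 0 : pDown 0 = 0 and F (n+1) = 0
      have e3 : F (n + 1) = 0 := dif_neg (by omega)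
      simp only [hG, Nat.sub_zero, Nat.zero_sub, Nat.zero_add] at h0 ⊢
      rw [pDown_zero] at h0 ⊢
      rw [e3] at h0
      linarith [h0]
    · obtain ⟨m, rfl⟩ : ∃ m, j = m + 1 := ⟨j - 1, by omega⟩
      have e1 : n - (m + 1) - 1 = n - (m + 1 + 1) := by omega
      have e2 : n - (m + 1) + 1 = n - (m + 1 - 1) := by omega
      rw [e1, e2] at h0
      simp only [hG]
      linarith [h0]
  -- uniqueness: the cross difference vanishes
  have hzero : ∀ j, j ≤ n → G 0 * F j - F 0 * G j = 0 := by
    intro j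
    induction j using Nat.strong_induction_on with
    | _ j ih =>
      intro hj
      match j with
      | 0 => ring
      | (m + 1) =>
        have hm : m ≤ n := by omega
        have e1 := hrec m hm
        have e2 := hrecg m hm
        have e3 : G 0 * F m - F 0 * G m = 0 := ih m (by omega) hm
        have e4 : G 0 * F (m - 1) - F 0 * G (m - 1) = 0 := ih (m - 1) (by omega) (by omega)
        have h5 : pUp n J 0 m * (G 0 * F (m + 1) - F 0 * G (m + 1)) = 0 := by
          linear_combination (G 0) * e1 - (F 0) * e2 - (pDown n J 0 m) * e4
            - (1 - pDown n J 0 m - pUp n J 0 m) * e3 + lam * e3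
        have h6 : pUp n J 0 m ≠ 0 := ne_of_gt (pUp_pos J 0 (by omega))
        rcases mul_eq_zero.mp h5 with h | h
        · exact absurd h h6
        · exact h
  -- basic facts about F
  have hFval : ∀ (j : ℕ) (h : j < n + 1), F j = f ⟨j, h⟩ := fun j h => dif_pos h
  have hmono : ∀ i j, i ≤ j → j ≤ n → F i ≤ F j := by
    intro i j hij hjn
    induction j with
    | zero => simp_all
    | succ m ihm =>
      rcases Nat.lt_or_ge i (m + 1) with h | h
      · have step : F m ≤ F (m + 1) := by
          have hmn : m < n := by omega
          have := hfinc ⟨m, hmn⟩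
          rw [hFval m (by omega), hFval (m + 1) (by omega)]
          convert this using 2 <;> simp [Fin.ext_iff]
        exact le_trans (ihm (by omega) (by omega)) step
      · have : i = m + 1 := by omega
        rw [this]
  -- F 0 < F n
  have hne : F 0 < F n := by
    rcases lt_or_ge (F 0) (F n) with h | h
    · exact h
    · exfalso
      apply hfnc
      intro k l
      have h1 : ∀ p : Fin (n + 1), f p = F 0 := by
        intro p
        have hp1 : F 0 ≤ F p := hmono 0 p (by omega) (by omega)
        have hp2 : F p ≤ F n := hmono p n (by omega) (le_refl n)
        have : F p = F 0 := le_antisymm (by linarith) hp1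
        rw [hFval p p.isLt] at this
        simpa using this
      rw [h1 k, h1 l]
  -- key relation : F n * F j = F 0 * F (n - j)
  have hkey : ∀ j, j ≤ n → F n * F j = F 0 * F (n - j) := by
    intro j hj
    have h := hzero j hj
    simp only [hG, Nat.sub_zero] at h
    linarith [h]
  -- F n = -F 0 and F n > 0
  have hsq : F n * F n = F 0 * F 0 := by
    have h := hkey n (le_refl n)
    simpa using h
  have hopp : F n = -F 0 := by
    have h : (F n - F 0) * (F n + F 0) = 0 := by linear_combination hsq
    rcases mul_eq_zero.mp h with h | h
    · exfalso; linarith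
    · linarith
  have hFn_pos : 0 < F n := by linarith
  have hF0_neg : F 0 < 0 := by linarith [hne, hopp]
  have hanti : ∀ j, j ≤ n → F j = -F (n - j) := by
    intro j hj
    have h := hkey j hj
    rw [hopp] at h
    have h' : F 0 * (F j + F (n - j)) = 0 := by linear_combination -h
    rcases mul_eq_zero.mp h' with h'' | h''
    · exfalso; linarith
    · linarith
  -- conclude
  have hrev : ∀ k : Fin (n + 1), (k.rev : ℕ) = n - (k : ℕ) := by
    intro k
    rw [Fin.val_rev]
    omega
  have main : ∀ k : Fin (n + 1), f k = -f k.rev := by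
    intro k
    have h := hanti (k : ℕ) (by omega)
    rw [hFval (k : ℕ) k.isLt] at h
    have h2 : F (n - (k : ℕ)) = f k.rev := by
      rw [hFval (n - (k : ℕ)) (by omega)]
      congr 1
      exact Fin.ext (by rw [hrev k])
    rw [h2] at h
    simpa using h
  refine ⟨main, ?_, ?_⟩
  · intro k hk
    have h1 : f k = -f k.rev := main k
    have h2 : F (k : ℕ) ≤ F (n - (k : ℕ)) := hmono _ _ (by omega) (by omega)
    rw [hFval (k : ℕ) k.isLt] at h2
    have h3 : F (n - (k : ℕ)) = f k.rev := by
      rw [hFval (n - (k : ℕ)) (by omega)]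
      congr 1
      exact Fin.ext (by rw [hrev k])
    rw [h3] at h2
    linarith [h1, h2]
  · intro k hk
    have h1 : f k = -f k.rev := main k
    have h2 : F (n - (k : ℕ)) ≤ F (k : ℕ) := hmono _ _ (by omega) (by omega)
    rw [hFval (k : ℕ) k.isLt] at h2
    have h3 : F (n - (k : ℕ)) = f k.rev := by
      rw [hFval (n - (k : ℕ)) (by omega)]
      congr 1
      exact Fin.ext (by rw [hrev k])
    rw [h3] at h2
    linarith [h1, h2]
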